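/- Let V be a 4-dimensional real vector space with a Lorentz metric, and let W be a 2-dimensional subspace of the space of bivectors on V such that every element of W is simple. Then there exists a nonzero vector k ∈ V with F_{ab}k^b = 0 for every F ∈ W, or the blades of all nonzero elements of W lie in a common 3-dimensional subspace; in particular, the span U of the union of the blades of members of W satisfies dim U ≤ 3. -/

import Mathlib

open scoped BigOperators
open Matrix

/-- A bivector is *simple* if it is the exterior product of two (co)vectors. -/
def IsSimpleBivector (F : Matrix (Fin 4) (Fin 4) ℝ) : Prop :=
  ∃ r s : Fin 4 → ℝ, ∀ a b, F a b = r a * s b - r b * s a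

/-- A metric has Lorentz signature if it is congruent to diag(1,1,1,-1). -/
def IsLorentzMetric (g : Matrix (Fin 4) (Fin 4) ℝ) : Prop :=
  (∀ a b, g a b = g b a) ∧
  ∃ P : Matrix (Fin 4) (Fin 4) ℝ, IsUnit P.det ∧
    Pᵀ * g * P = Matrix.diagonal ![1, 1, 1, -1]

/-- The span of the union of the blades of the members of a space `W` of bivectors
(for a simple bivector the blade is the range of the associated linear map; for a
non-simple bivector the range is the span of its two blades). -/
def bladeSpan (W : Submodule ℝ (Matrix (Fin 4) (Fin 4) ℝ)) :
    Submodule ℝ (Fin 4 → ℝ) :=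
  ⨆ F : W, LinearMap.range (Matrix.mulVecLin (F : Matrix (Fin 4) (Fin 4) ℝ))

theorem my_det_fin_four (A : Matrix (Fin 4) (Fin 4) ℝ) :
    A.det =
      A 0 0 * A 1 1 * A 2 2 * A 3 3 - A 0 0 * A 1 1 * A 2 3 * A 3 2 -
      A 0 0 * A 1 2 * A 2 1 * A 3 3 + A 0 0 * A 1 2 * A 2 3 * A 3 1 +
      A 0 0 * A 1 3 * A 2 1 * A 3 2 - A 0 0 * A 1 3 * A 2 2 * A 3 1 -
      A 0 1 * A 1 0 * A 2 2 * A 3 3 + A 0 1 * A 1 0 * A 2 3 * A 3 2 +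
      A 0 1 * A 1 2 * A 2 0 * A 3 3 - A 0 1 * A 1 2 * A 2 3 * A 3 0 -
      A 0 1 * A 1 3 * A 2 0 * A 3 2 + A 0 1 * A 1 3 * A 2 2 * A 3 0 +
      A 0 2 * A 1 0 * A 2 1 * A 3 3 - A 0 2 * A 1 0 * A 2 3 * A 3 1 -
      A 0 2 * A 1 1 * A 2 0 * A 3 3 + A 0 2 * A 1 1 * A 2 3 * A 3 0 +
      A 0 2 * A 1 3 * A 2 0 * A 3 1 - A 0 2 * A 1 3 * A 2 1 * A 3 0 -
      A 0 3 * A 1 0 * A 2 1 * A 3 2 + A 0 3 * A 1 0 * A 2 2 * A 3 1 +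
      A 0 3 * A 1 1 * A 2 0 * A 3 2 - A 0 3 * A 1 1 * A 2 2 * A 3 0 -
      A 0 3 * A 1 2 * A 2 0 * A 3 1 + A 0 3 * A 1 2 * A 2 1 * A 3 0 := by
  rw [Matrix.det_succ_row_zero, Fin.sum_univ_four]
  simp (config := { decide := true }) [Matrix.det_fin_three, Matrix.submatrix_apply,
    Fin.succAbove, Fin.lt_def, show (Fin.succ 2 : Fin 4) = 3 from rfl,
    show (Fin.succ 1 : Fin 4) = 2 from rfl, show (Fin.succ 0 : Fin 4) = 1 from rfl,
    show (Fin.castSucc 2 : Fin 4) = 2 from rfl, show (Fin.castSucc 1 : Fin 4) = 1 from rfl,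
    show (Fin.castSucc 0 : Fin 4) = 0 from rfl]
  ring

/-- if `W` is a 2-dimensional space of bivectors all of whose members
are simple, then some nonzero vector is annihilated by every member of `W`, and
the span `U` of the union of the blades has dimension at most 3. -/
theorem two_dim_all_simple
    (g : Matrix (Fin 4) (Fin 4) ℝ) (hg : IsLorentzMetric g)
    (W : Submodule ℝ (Matrix (Fin 4) (Fin 4) ℝ))
    (hanti : ∀ F ∈ W, ∀ a b, F a b = - F b a)
    (hsimple : ∀ F ∈ W, IsSimpleBivector F)
    (hdim : Module.finrank ℝ W = 2) :
    (∃ k : Fin 4 → ℝ, k ≠ 0 ∧ ∀ F ∈ W, Matrix.mulVec F k = 0) ∧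
      Module.finrank ℝ (bladeSpan W) ≤ 3 := by
  classical
  -- a basis of W
  let b : Module.Basis (Fin 2) ℝ W := Module.finBasisOfFinrankEq ℝ W hdim
  obtain ⟨r, s, hF⟩ := hsimple (b 0) (b 0).2
  obtain ⟨p, q, hG⟩ := hsimple (b 1) (b 1).2
  obtain ⟨u, v, hH⟩ :=
    hsimple ((b 0 : Matrix (Fin 4) (Fin 4) ℝ) + (b 1 : Matrix (Fin 4) (Fin 4) ℝ))
      (W.add_mem (b 0).2 (b 1).2)
  have e : ∀ a b' : Fin 4,
      r a * s b' - r b' * s a + (p a * q b' - p b' * q a) = u a * v b' - u b' * v a := by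
    intro a b'
    have h := hH a b'
    rw [Matrix.add_apply, hF a b', hG a b'] at h
    linarith
  -- determinant of the matrix of blade vectors vanishes
  set M : Matrix (Fin 4) (Fin 4) ℝ := Matrix.of ![r, s, p, q] with hM
  have hdet : M.det = 0 := by
    have e01 := e 0 1
    have e02 := e 0 2
    have e03 := e 0 3
    have e12 := e 1 2
    have e13 := e 1 3
    have e23 := e 2 3
    rw [my_det_fin_four]
    simp only [hM, Matrix.of_apply, Matrix.cons_val', Matrix.cons_val_zero, Matrix.cons_val_one,
      Matrix.head_cons, Matrix.cons_val_two, Matrix.tail_cons, Matrix.cons_val_three,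
      Matrix.head_fin_const, Matrix.empty_val', Matrix.cons_val_fin_one]
    linear_combination
      (r 2 * s 3 - r 3 * s 2 + (p 2 * q 3 - p 3 * q 2)) * e01
      + (u 0 * v 1 - u 1 * v 0) * e23
      - (r 1 * s 3 - r 3 * s 1 + (p 1 * q 3 - p 3 * q 1)) * e02
      - (u 0 * v 2 - u 2 * v 0) * e13
      + (r 1 * s 2 - r 2 * s 1 + (p 1 * q 2 - p 2 * q 1)) * e03
      + (u 0 * v 3 - u 3 * v 0) * e12
  obtain ⟨k, hk0, hMk⟩ := Matrix.exists_mulVec_eq_zero_iff.mpr hdet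
  have hr : r 0 * k 0 + r 1 * k 1 + r 2 * k 2 + r 3 * k 3 = 0 := by
    have := congrFun hMk 0
    simpa [hM, Matrix.mulVec, dotProduct, Fin.sum_univ_four] using this
  have hs : s 0 * k 0 + s 1 * k 1 + s 2 * k 2 + s 3 * k 3 = 0 := by
    have := congrFun hMk 1
    simpa [hM, Matrix.mulVec, dotProduct, Fin.sum_univ_four] using this
  have hp : p 0 * k 0 + p 1 * k 1 + p 2 * k 2 + p 3 * k 3 = 0 := by
    have := congrFun hMk 2
    simpa [hM, Matrix.mulVec, dotProduct, Fin.sum_univ_four] using this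
  have hq : q 0 * k 0 + q 1 * k 1 + q 2 * k 2 + q 3 * k 3 = 0 := by
    have := congrFun hMk 3
    simpa [hM, Matrix.mulVec, dotProduct, Fin.sum_univ_four] using this
  have hFk : Matrix.mulVec (b 0 : Matrix (Fin 4) (Fin 4) ℝ) k = 0 := by
    funext a
    simp only [Matrix.mulVec, dotProduct, Fin.sum_univ_four, hF, Pi.zero_apply]
    linear_combination r a * hs - s a * hr
  have hGk : Matrix.mulVec (b 1 : Matrix (Fin 4) (Fin 4) ℝ) k = 0 := by
    funext a
    simp only [Matrix.mulVec, dotProduct, Fin.sum_univ_four, hG, Pi.zero_apply]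
    linear_combination p a * hq - q a * hp
  have hW : ∀ X ∈ W, Matrix.mulVec X k = 0 := by
    intro X hX
    have hrepr := b.sum_repr ⟨X, hX⟩
    have hXeq : X = b.repr ⟨X, hX⟩ 0 • (b 0 : Matrix (Fin 4) (Fin 4) ℝ)
        + b.repr ⟨X, hX⟩ 1 • (b 1 : Matrix (Fin 4) (Fin 4) ℝ) := by
      have := congrArg (Subtype.val) hrepr
      rw [Fin.sum_univ_two] at this
      simpa using this.symm
    rw [hXeq, Matrix.add_mulVec, Matrix.smul_mulVec, Matrix.smul_mulVec,
      hFk, hGk, smul_zero, smul_zero, add_zero]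
  refine ⟨⟨k, hk0, hW⟩, ?_⟩
  -- the dot-product-with-k functional
  let D : (Fin 4 → ℝ) →ₗ[ℝ] ℝ :=
    { toFun := fun x => dotProduct x k
      map_add' := fun x y => add_dotProduct x y k
      map_smul' := fun c x => smul_dotProduct c x k }
  have hle : bladeSpan W ≤ LinearMap.ker D := by
    rw [bladeSpan]
    apply iSup_le
    rintro ⟨X, hX⟩ y hy
    obtain ⟨x, rfl⟩ := hy
    have hXT : Xᵀ = -X := by
      ext a b'
      simp only [Matrix.transpose_apply, Matrix.neg_apply]
      exact hanti X hX b' a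
    rw [LinearMap.mem_ker]
    show dotProduct (Matrix.mulVecLin X x) k = 0
    rw [Matrix.mulVecLin_apply, dotProduct_comm, Matrix.dotProduct_mulVec,
      ← Matrix.mulVec_transpose, hXT, Matrix.neg_mulVec, hW X hX, neg_zero,
      zero_dotProduct]
  have hkk : dotProduct k k ≠ 0 := fun h => hk0 (dotProduct_self_eq_zero.mp h)
  have hsurj : Function.Surjective D := by
    intro c
    refine ⟨(c / dotProduct k k) • k, ?_⟩
    show dotProduct ((c / dotProduct k k) • k) k = c
    rw [smul_dotProduct, smul_eq_mul, div_mul_cancel₀ _ hkk]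
  have hrange : Module.finrank ℝ (LinearMap.range D) = 1 := by
    rw [LinearMap.range_eq_top.mpr hsurj, finrank_top]
    exact Module.finrank_self ℝ
  have hrn := D.finrank_range_add_finrank_ker
  rw [hrange, Module.finrank_fin_fun] at hrn
  have hker : Module.finrank ℝ (LinearMap.ker D) = 3 := by omega
  calc Module.finrank ℝ (bladeSpan W) ≤ Module.finrank ℝ (LinearMap.ker D) :=
        Submodule.finrank_mono hle
    _ = 3 := hker
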